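/- Let a(t) = 1/4 - (3/4)t + (3/4)t² - (1/4)t³, b(t) = 1/2 - (3/2)t, c(t) = 1/4 - 3t/(4(1-t)), and g(t) = t³(t-1)/(1-4t). Then for all real t with 0 ≤ t < 1/4 and all real x ≥ 0, y ≥ 0, one has a(t)·x² - b(t)·x·y + c(t)·y² ≥ g(t)·x². -/

import Mathlib

theorem stmt_6 (t x y : ℝ) (ht0 : 0 ≤ t) (ht1 : t < 1/4) (hx : 0 ≤ x) (hy : 0 ≤ y) :
    (1/4 - (3/4)*t + (3/4)*t^2 - (1/4)*t^3) * x^2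
      - (1/2 - (3/2)*t) * x * y
      + (1/4 - 3*t/(4*(1-t))) * y^2
    ≥ (t^3 * (t-1) / (1 - 4*t)) * x^2 := by
  have h1 : (0:ℝ) < 1 - t := by linarith
  have h4 : (0:ℝ) < 1 - 4*t := by linarith
  rw [ge_iff_le, div_mul_eq_mul_div, div_le_iff₀ h4]
  have hc : 3*t/(4*(1-t)) = 3*t/(4*(1-t)) := rfl
  have key : (1/4 - 3*t/(4*(1-t))) = (1-4*t)/(4*(1-t)) := by
    field_simp; ring
  rw [key]
  have hsq := sq_nonneg ((1-4*t)*y - (1-3*t)*(1-t)*x)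
  have h1' : (1-t) ≠ 0 := ne_of_gt h1
  field_simp
  nlinarith [sq_nonneg ((1-4*t)*y - (1-3*t)*(1-t)*x), mul_pos h1 h4]
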